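/- Universal property of (ω, F): if E is a coarse structure on ω in which every bounded set is finite, then every injective map f : (ω, E) → (ω, F) is macro-uniform (bornologous). -/
import Mathlib


open Set Pointwise Filter Topology

/-- Ball of radius `E` around `x`. -/
def cball {X : Type*} (E : Set (X × X)) (x : X) : Set X := {y | (x, y) ∈ E}

/-- Ball of radius `E` around a set `A`. -/
def cballSet {X : Type*} (E : Set (X × X)) (A : Set X) : Set X := ⋃ a ∈ A, cball E a

/-- The condition on `φ : ω → [ω]^{<ω}` defining the family `Φ`. -/
def IsPhi (φ : ℕ → Finset ℕ) : Prop := (∀ n, n ∈ φ n) ∧ ∀ n, {m | n ∈ φ m}.Finite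

/-- The coarse structure `F` on `ω`. -/
def Ffam : Set (Set (ℕ × ℕ)) :=
  {E | ∃ φ : ℕ → Finset ℕ, IsPhi φ ∧ E ⊆ {p : ℕ × ℕ | p.2 ∈ φ p.1}}

/-- A coarse structure on a set `X`. -/
structure CoarseStructure (X : Type*) where
  sets : Set (Set (X × X))
  diag_mem : {p : X × X | p.1 = p.2} ∈ sets
  subset_mem : ∀ {E E' : Set (X × X)}, E ∈ sets → E' ⊆ E → E' ∈ sets
  union_mem : ∀ {E E' : Set (X × X)}, E ∈ sets → E' ∈ sets → E ∪ E' ∈ sets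
  inv_mem : ∀ {E : Set (X × X)}, E ∈ sets → {p : X × X | (p.2, p.1) ∈ E} ∈ sets
  comp_mem : ∀ {E E' : Set (X × X)}, E ∈ sets → E' ∈ sets →
    {p : X × X | ∃ z, (p.1, z) ∈ E ∧ (z, p.2) ∈ E'} ∈ sets

/-- A map between coarse spaces (given by families of entourages) is macro-uniform. -/
def MacroUniform {X Y : Type*} (CX : Set (Set (X × X))) (CY : Set (Set (Y × Y)))
    (f : X → Y) : Prop :=
  ∀ E ∈ CX, ∃ E' ∈ CY, ∀ x, f '' cball E x ⊆ cball E' (f x)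

/-- universal property of `(ω, F)`. -/
theorem Ffam_universal (C : CoarseStructure ℕ)
    (hb : ∀ B : Set ℕ, (∃ E ∈ C.sets, ∃ x : ℕ, B ⊆ cball E x) → B.Finite)
    (f : ℕ → ℕ) (hf : Function.Injective f) :
    MacroUniform C.sets Ffam f := by
  classical
  intro E hE
  set S : ℕ → Set ℕ := fun n => insert n (f '' ⋃ x ∈ f ⁻¹' {n}, cball E x) with hSdef
  have hfin : ∀ n, (S n).Finite := by
    intro n
    refine (Set.Finite.image f ?_).insert n
    refine Set.Finite.biUnion ?_ fun x _ => hb _ ⟨E, hE, x, subset_rfl⟩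
    refine Set.Subsingleton.finite ?_
    intro a ha b hb'
    exact hf (ha.trans hb'.symm)
  set φ : ℕ → Finset ℕ := fun n => (hfin n).toFinset with hφdef
  have hmemφ : ∀ m n, n ∈ φ m ↔ n ∈ S m := by
    intro m n; simp only [hφdef, Set.Finite.mem_toFinset]
  have hPhi : IsPhi φ := by
    constructor
    · intro n; rw [hmemφ]; exact Set.mem_insert _ _
    · intro n
      by_cases hn : ∃ y, f y = n
      · obtain ⟨y, rfl⟩ := hn
        have hsub : {m | f y ∈ φ m} ⊆
            insert (f y) (f '' cball {p : ℕ × ℕ | (p.2, p.1) ∈ E} y) := by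
          intro m hm
          rw [Set.mem_setOf_eq, hmemφ] at hm
          rcases hm with h | ⟨z, hz, hzn⟩
          · exact Or.inl h.symm
          · simp only [Set.mem_iUnion, Set.mem_preimage, Set.mem_singleton_iff] at hz
            obtain ⟨x, hx, hzx⟩ := hz
            have hxy : z = y := hf hzn
            subst hxy
            exact Or.inr ⟨x, hzx, hx⟩
        exact Set.Finite.subset
          (((hb _ ⟨_, C.inv_mem hE, y, subset_rfl⟩).image f).insert _) hsub
      · have hsub : {m | n ∈ φ m} ⊆ {n} := by
          intro m hm
          rw [Set.mem_setOf_eq, hmemφ] at hm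
          rcases hm with h | ⟨z, _, hzn⟩
          · exact h.symm
          · exact absurd ⟨z, hzn⟩ hn
        exact (Set.finite_singleton n).subset hsub
  refine ⟨{p : ℕ × ℕ | p.2 ∈ φ p.1}, ⟨φ, hPhi, subset_rfl⟩, ?_⟩
  intro x z hz
  obtain ⟨w, hw, rfl⟩ := hz
  show f w ∈ φ (f x)
  rw [hmemφ]
  refine Or.inr ⟨w, ?_, rfl⟩
  simp only [Set.mem_iUnion]
  exact ⟨x, rfl, hw⟩
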